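/- Let n, m ≥ 2 and C ≥ (min(n,m)-1)². If A is a real n×m matrix with positive entries such that A(i,j)·A(i',j') ≥ C·A(i,j')·A(i',j) for all i < i' and j < j', then A is totally nonnegative, i.e., every minor of A is nonnegative. If the defining inequalities are strict, then A is totally positive. -/

import Mathlib

open Finset Equiv

namespace TN2Caux

variable {k : ℕ}

def invs (σ : Equiv.Perm (Fin k)) : Finset (Fin k × Fin k) :=
  Finset.univ.filter (fun p => p.1 < p.2 ∧ σ p.2 < σ p.1)

lemma mem_invs {σ : Equiv.Perm (Fin k)} {p : Fin k × Fin k} :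
    p ∈ invs σ ↔ p.1 < p.2 ∧ σ p.2 < σ p.1 := by simp [invs]

lemma invs_one : invs (1 : Equiv.Perm (Fin k)) = ∅ := by
  ext p
  simp only [mem_invs, Finset.notMem_empty, iff_false, not_and]
  intro h
  simp only [Perm.one_apply]
  exact asymm h

lemma perm_eq_one_of_strictMono {σ : Equiv.Perm (Fin k)} (h : StrictMono σ) : σ = 1 := by
  have hinv : StrictMono (σ.symm : Fin k → Fin k) := by
    intro a b hab
    have h2 := h.lt_iff_lt (a := σ.symm a) (b := σ.symm b)
    simpa using h2.mp (by simpa using hab)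
  ext x
  have wf : WellFoundedLT (Fin k) := inferInstance
  have h1 : x ≤ σ x := h.le_apply
  have h2 : σ x ≤ x := by simpa using hinv.le_apply (x := σ x)
  simp [le_antisymm h2 h1]

lemma eq_one_of_invs_empty {σ : Equiv.Perm (Fin k)} (h : invs σ = ∅) : σ = 1 := by
  apply perm_eq_one_of_strictMono
  intro a b hab
  have hne : σ a ≠ σ b := fun hc => (ne_of_lt hab) (σ.injective hc)
  rcases lt_or_gt_of_ne hne with h1 | h1
  · exact h1
  · exact absurd ((mem_invs (p := (a,b))).mpr ⟨hab, h1⟩) (by simp [h])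

/-- existence of an adjacent descent -/
lemma exists_descent {σ : Equiv.Perm (Fin k)} (h : σ ≠ 1) :
    ∃ i j : Fin k, j.val = i.val + 1 ∧ σ j < σ i := by
  by_contra hc
  push_neg at hc
  apply h
  apply perm_eq_one_of_strictMono
  rcases k with _ | k'
  · exact fun a => absurd a.2 (by omega)
  · rw [Fin.strictMono_iff_lt_succ]
    intro i
    have := hc i.castSucc i.succ (by simp)
    have hne : σ i.succ ≠ σ i.castSucc := by
      intro hc2
      have h3 := congrArg Fin.val (σ.injective hc2)
      simp at h3
    exact lt_of_le_of_ne this hne.symm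

end TN2Caux

namespace TN2Caux

lemma swap_sorts {k : ℕ} {i j a b : Fin k} (hadj : j.val = i.val + 1)
    (hab : a < b) (hne : ¬(a = i ∧ b = j)) : Equiv.swap i j a < Equiv.swap i j b := by
  simp only [Equiv.swap_apply_def]
  split_ifs <;> (simp only [Fin.lt_def, Fin.ext_iff, not_and] at * <;> omega)

lemma card_invs_swap {k : ℕ} {σ : Equiv.Perm (Fin k)} {i j : Fin k} (hadj : j.val = i.val + 1)
    (hd : σ j < σ i) : (invs (σ * Equiv.swap i j)).card + 1 = (invs σ).card := by
  have hij : i < j := by rw [Fin.lt_def]; omega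
  have hijne : i ≠ j := ne_of_lt hij
  have hmem : (i, j) ∈ invs σ := mem_invs.mpr ⟨hij, hd⟩
  have hbij : (invs (σ * Equiv.swap i j)).card = ((invs σ).erase (i, j)).card := by
    apply Finset.card_nbij' (fun p => (Equiv.swap i j p.1, Equiv.swap i j p.2))
      (fun p => (Equiv.swap i j p.1, Equiv.swap i j p.2))
    · intro p hp
      obtain ⟨h1, h2⟩ := mem_invs.mp hp
      simp only [Perm.mul_apply] at h2
      have hne : ¬(p.1 = i ∧ p.2 = j) := by
        rintro ⟨e1, e2⟩
        rw [e1, e2, Equiv.swap_apply_left, Equiv.swap_apply_right] at h2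
        exact absurd hd (asymm h2)
      rw [Finset.mem_coe, Finset.mem_erase]
      constructor
      · intro hc
        have c1 : Equiv.swap i j p.1 = i := congrArg Prod.fst hc
        have c2 : Equiv.swap i j p.2 = j := congrArg Prod.snd hc
        have d1 : p.1 = j := by
          have := congrArg (Equiv.swap i j) c1
          simpa [Equiv.swap_apply_self, Equiv.swap_apply_left] using this
        have d2 : p.2 = i := by
          have := congrArg (Equiv.swap i j) c2
          simpa [Equiv.swap_apply_self, Equiv.swap_apply_right] using this
        rw [d1, d2] at h1
        exact absurd h1 (asymm hij)
      · exact mem_invs.mpr ⟨swap_sorts hadj h1 hne, by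
          simpa [Equiv.swap_apply_self] using h2⟩
    · intro p hp
      rw [Finset.mem_coe, Finset.mem_erase] at hp
      obtain ⟨hpne, hp⟩ := hp
      obtain ⟨h1, h2⟩ := mem_invs.mp hp
      have hne : ¬(p.1 = i ∧ p.2 = j) := by
        rintro ⟨e1, e2⟩
        exact hpne (Prod.ext e1 e2)
      refine mem_invs.mpr ⟨swap_sorts hadj h1 hne, ?_⟩
      simp only [Perm.mul_apply, Equiv.swap_apply_self]
      exact h2
    · intro p _; simp [Equiv.swap_apply_self]
    · intro p _; simp [Equiv.swap_apply_self]
  have hpos : 1 ≤ (invs σ).card := Finset.card_pos.mpr ⟨_, hmem⟩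
  rw [hbij, Finset.card_erase_of_mem hmem]
  omega

end TN2Caux

namespace TN2Caux

lemma card_filter_lt {k : ℕ} (x : Fin k) :
    (Finset.univ.filter (fun b => b < x)).card = x.val := by
  have h : Finset.univ.filter (fun b => b < x) = Finset.Iio x := by ext b; simp
  rw [h, Fin.card_Iio]

lemma rank_identity {k : ℕ} (σ : Equiv.Perm (Fin k)) (a : Fin k) :
    (σ a).val + (Finset.univ.filter (fun b => (b, a) ∈ invs σ)).card
      = a.val + (Finset.univ.filter (fun b => (a, b) ∈ invs σ)).card := by
  classical
  have hu : Finset.univ.filter (fun b => (b, a) ∈ invs σ)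
      = Finset.univ.filter (fun b => b < a ∧ σ a < σ b) := by
    ext b; simp [mem_invs]
  have hd : Finset.univ.filter (fun b => (a, b) ∈ invs σ)
      = Finset.univ.filter (fun b => a < b ∧ σ b < σ a) := by
    ext b; simp [mem_invs]
  rw [hu, hd]
  have hL : (Finset.univ.filter (fun b => σ b < σ a)).card = (σ a).val := by
    rw [← card_filter_lt (σ a)]
    apply Finset.card_nbij' σ σ.symm
    · intro b hb; simp only [Finset.mem_coe, Finset.mem_filter, Finset.mem_univ, true_and] at hb ⊢; exact hb
    · intro b hb; simp only [Finset.mem_coe, Finset.mem_filter, Finset.mem_univ, true_and] at hb ⊢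
      simpa using hb
    · intro b _; simp
    · intro b _; simp
  have hsplit1 : (Finset.univ.filter (fun b => σ b < σ a)).card
      = (Finset.univ.filter (fun b => b < a ∧ σ b < σ a)).card
        + (Finset.univ.filter (fun b => a < b ∧ σ b < σ a)).card := by
    rw [← Finset.card_union_of_disjoint]
    · congr 1
      ext b
      simp only [Finset.mem_filter, Finset.mem_univ, true_and, Finset.mem_union]
      constructor
      · intro h
        have hba : b ≠ a := by rintro rfl; exact lt_irrefl _ h
        rcases lt_or_gt_of_ne hba with h1 | h1
        · exact Or.inl ⟨h1, h⟩
        · exact Or.inr ⟨h1, h⟩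
      · rintro (⟨_, h⟩ | ⟨_, h⟩) <;> exact h
    · rw [Finset.disjoint_left]
      rintro b hb1 hb2
      simp only [Finset.mem_filter] at hb1 hb2
      exact absurd hb2.2.1 (asymm hb1.2.1)
  have hsplit2 : (a.val : ℕ)
      = (Finset.univ.filter (fun b => b < a ∧ σ b < σ a)).card
        + (Finset.univ.filter (fun b => b < a ∧ σ a < σ b)).card := by
    rw [← card_filter_lt a, ← Finset.card_union_of_disjoint]
    · congr 1
      ext b
      simp only [Finset.mem_filter, Finset.mem_univ, true_and, Finset.mem_union]
      constructor
      · intro h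
        have hne : σ b ≠ σ a := fun hc => (ne_of_lt h) (σ.injective hc)
        rcases lt_or_gt_of_ne hne with h1 | h1
        · exact Or.inl ⟨h, h1⟩
        · exact Or.inr ⟨h, h1⟩
      · rintro (⟨h, _⟩ | ⟨h, _⟩) <;> exact h
    · rw [Finset.disjoint_left]
      rintro b hb1 hb2
      simp only [Finset.mem_filter] at hb1 hb2
      exact absurd hb2.2.2 (asymm hb1.2.2)
  omega

lemma invs_injective {k : ℕ} : Function.Injective (invs (k := k)) := by
  intro σ τ h
  ext a
  have h1 := rank_identity σ a
  have h2 := rank_identity τ a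
  rw [h] at h1
  have : (σ a).val = (τ a).val := by omega
  exact this

end TN2Caux

namespace TN2Caux

variable {k : ℕ} {C : ℝ} {B : Matrix (Fin k) (Fin k) ℝ}

lemma step_eqs (hpos : ∀ i j, 0 < B i j) {σ : Equiv.Perm (Fin k)} {i j : Fin k}
    (hij : i < j) :
    (∏ x, B x (σ x)) = (B i (σ i) * B j (σ j)) * ∏ x ∈ (Finset.univ.erase i).erase j, B x (σ x)
    ∧ (∏ x, B x ((σ * Equiv.swap i j) x))
      = (B i (σ j) * B j (σ i)) * ∏ x ∈ (Finset.univ.erase i).erase j, B x (σ x) := by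
  have hne : i ≠ j := ne_of_lt hij
  have hjmem : j ∈ Finset.univ.erase i := by simp [hne.symm]
  constructor
  · rw [← Finset.mul_prod_erase Finset.univ _ (Finset.mem_univ i),
      ← Finset.mul_prod_erase _ _ hjmem]
    ring
  · rw [← Finset.mul_prod_erase Finset.univ _ (Finset.mem_univ i),
      ← Finset.mul_prod_erase _ (fun x => B x ((σ * Equiv.swap i j) x)) hjmem]
    have e1 : (σ * Equiv.swap i j) i = σ j := by simp [Equiv.swap_apply_left]
    have e2 : (σ * Equiv.swap i j) j = σ i := by simp [Equiv.swap_apply_right]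
    rw [e1, e2]
    have e3 : ∏ x ∈ (Finset.univ.erase i).erase j, B x ((σ * Equiv.swap i j) x)
        = ∏ x ∈ (Finset.univ.erase i).erase j, B x (σ x) := by
      apply Finset.prod_congr rfl
      intro x hx
      simp only [Finset.mem_erase, Finset.mem_univ] at hx
      rw [Equiv.Perm.mul_apply, Equiv.swap_apply_of_ne_of_ne hx.2.1 hx.1]
    rw [e3]
    ring

lemma step_le (hpos : ∀ i j, 0 < B i j) {σ : Equiv.Perm (Fin k)} {i j : Fin k}
    (hij : i < j)
    (hstep : C * (B i (σ i) * B j (σ j)) ≤ B i (σ j) * B j (σ i)) :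
    C * ∏ x, B x (σ x) ≤ ∏ x, B x ((σ * Equiv.swap i j) x) := by
  obtain ⟨e1, e2⟩ := step_eqs hpos hij (σ := σ)
  have hR : (0:ℝ) ≤ ∏ x ∈ (Finset.univ.erase i).erase j, B x (σ x) :=
    le_of_lt (Finset.prod_pos (fun x _ => hpos _ _))
  rw [e1, e2, ← mul_assoc]
  exact mul_le_mul_of_nonneg_right hstep hR

lemma step_lt (hpos : ∀ i j, 0 < B i j) {σ : Equiv.Perm (Fin k)} {i j : Fin k}
    (hij : i < j)
    (hstep : C * (B i (σ i) * B j (σ j)) < B i (σ j) * B j (σ i)) :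
    C * ∏ x, B x (σ x) < ∏ x, B x ((σ * Equiv.swap i j) x) := by
  obtain ⟨e1, e2⟩ := step_eqs hpos hij (σ := σ)
  have hR : (0:ℝ) < ∏ x ∈ (Finset.univ.erase i).erase j, B x (σ x) :=
    Finset.prod_pos (fun x _ => hpos _ _)
  rw [e1, e2, ← mul_assoc]
  exact mul_lt_mul_of_pos_right hstep hR

lemma prod_le_of_invs (hC0 : 0 ≤ C) (hpos : ∀ i j, 0 < B i j)
    (hB : ∀ i i' j j', i < i' → j < j' → C * (B i j' * B i' j) ≤ B i j * B i' j')
    (σ : Equiv.Perm (Fin k)) :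
    C ^ (invs σ).card * ∏ x, B x (σ x) ≤ ∏ x, B x x := by
  generalize hN : (invs σ).card = N
  induction N generalizing σ with
  | zero =>
    have h1 : σ = 1 := eq_one_of_invs_empty (Finset.card_eq_zero.mp hN)
    subst h1; simp
  | succ N ih =>
    have hσ : σ ≠ 1 := by
      rintro rfl; rw [invs_one] at hN; simp at hN
    obtain ⟨i, j, hadj, hd⟩ := exists_descent hσ
    have hij : i < j := by rw [Fin.lt_def]; omega
    have hcard := card_invs_swap hadj hd
    have h1 := step_le hpos hij (hB i j (σ j) (σ i) hij hd)
    have h2 := ih (σ * Equiv.swap i j) (by omega)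
    calc C ^ (N+1) * ∏ x, B x (σ x) = C ^ N * (C * ∏ x, B x (σ x)) := by ring
      _ ≤ C ^ N * ∏ x, B x ((σ * Equiv.swap i j) x) :=
          mul_le_mul_of_nonneg_left h1 (pow_nonneg hC0 N)
      _ ≤ ∏ x, B x x := h2

lemma prod_lt_of_invs (hC0 : 0 < C) (hpos : ∀ i j, 0 < B i j)
    (hB : ∀ i i' j j', i < i' → j < j' → C * (B i j' * B i' j) < B i j * B i' j')
    {σ : Equiv.Perm (Fin k)} (hσ : σ ≠ 1) :
    C ^ (invs σ).card * ∏ x, B x (σ x) < ∏ x, B x x := by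
  obtain ⟨i, j, hadj, hd⟩ := exists_descent hσ
  have hij : i < j := by rw [Fin.lt_def]; omega
  have hcard := card_invs_swap hadj hd
  have h1 := step_lt hpos hij (hB i j (σ j) (σ i) hij hd)
  have h2 := prod_le_of_invs (le_of_lt hC0) hpos
    (fun a b c d h5 h6 => le_of_lt (hB a b c d h5 h6)) (σ * Equiv.swap i j)
  calc C ^ (invs σ).card * ∏ x, B x (σ x)
      = C ^ (invs (σ * Equiv.swap i j)).card * (C * ∏ x, B x (σ x)) := by
        rw [← hcard]; ring
    _ < C ^ (invs (σ * Equiv.swap i j)).card * ∏ x, B x ((σ * Equiv.swap i j) x) :=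
        mul_lt_mul_of_pos_left h1 (pow_pos hC0 _)
    _ ≤ ∏ x, B x x := h2

end TN2Caux

namespace TN2Caux

lemma sum_q_pow_le {k : ℕ} {q : ℝ} (hq : 0 ≤ q) :
    ∑ σ : Equiv.Perm (Fin k), q ^ (invs σ).card
      ≤ (q + 1) ^ (Finset.univ.filter (fun p : Fin k × Fin k => p.1 < p.2)).card := by
  classical
  set P := Finset.univ.filter (fun p : Fin k × Fin k => p.1 < p.2) with hP
  have h1 : ∑ σ : Equiv.Perm (Fin k), q ^ (invs σ).card
      = ∑ T ∈ Finset.univ.image (invs (k := k)), q ^ T.card := by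
    rw [Finset.sum_image (fun a _ b _ h => invs_injective h)]
  have h2 : Finset.univ.image (invs (k := k)) ⊆ P.powerset := by
    intro T hT
    simp only [Finset.mem_image] at hT
    obtain ⟨σ, _, rfl⟩ := hT
    rw [Finset.mem_powerset]
    intro p hp
    simp only [hP, Finset.mem_filter, Finset.mem_univ, true_and]
    exact (mem_invs.mp hp).1
  have h3 : (q + 1) ^ P.card = ∑ T ∈ P.powerset, q ^ T.card := by
    have h := Finset.prod_add (fun _ => q) (fun _ => (1:ℝ)) P
    simp only [Finset.prod_const, one_pow, mul_one] at h
    rw [← h]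
  rw [h1, h3]
  exact Finset.sum_le_sum_of_subset_of_nonneg h2 (fun T _ _ => pow_nonneg hq _)

lemma two_mul_card_pairs (k : ℕ) :
    2 * (Finset.univ.filter (fun p : Fin k × Fin k => p.1 < p.2)).card = k * (k - 1) := by
  classical
  have h1 : (Finset.univ.filter (fun p : Fin k × Fin k => p.1 < p.2)).card
      = ∑ b : Fin k, (b.val : ℕ) := by
    rw [Finset.card_filter]
    rw [Fintype.sum_prod_type]
    rw [Finset.sum_comm]
    congr 1
    ext b
    rw [← card_filter_lt b, Finset.card_filter]
  rw [h1]
  have h2 : ∑ b : Fin k, (b.val : ℕ) = ∑ i ∈ Finset.range k, i :=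
    Fin.sum_univ_eq_sum_range (fun i => i) k
  rw [h2]
  have := Finset.sum_range_id_mul_two k
  omega

lemma exp_twothirds_le_two : Real.exp (2/3) ≤ 2 := by
  have h7 : Real.exp (2/3) ^ 3 = Real.exp 2 := by
    rw [← Real.exp_nat_mul]; norm_num
  have h8 : Real.exp 2 < 8 := by
    have h9 : Real.exp 2 = Real.exp 1 ^ 2 := by rw [← Real.exp_nat_mul]; norm_num
    have := Real.exp_one_lt_d9
    nlinarith [Real.exp_pos 1]
  by_contra hc
  push_neg at hc
  have h10 : (2:ℝ)^3 < Real.exp (2/3) ^ 3 := by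
    apply pow_lt_pow_left₀ hc (by norm_num)
    norm_num
  rw [h7] at h10
  norm_num at h10
  linarith

lemma pow_bound {k : ℕ} {q : ℝ} (hk : 2 ≤ k) (hq0 : 0 ≤ q)
    (hq : q * ((k:ℝ) - 1) ^ 2 ≤ 1) {Pc : ℕ} (hPc : 2 * Pc = k * (k - 1)) :
    (q + 1) ^ Pc ≤ 2 := by
  rcases Nat.lt_or_ge k 4 with hk4 | hk4
  · interval_cases k
    · -- k = 2
      have : Pc = 1 := by omega
      subst this
      have : ((2:ℕ):ℝ) - 1 = 1 := by norm_num
      rw [this] at hq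
      simp at hq ⊢
      linarith
    · -- k = 3
      have : Pc = 3 := by omega
      subst this
      have h4 : q ≤ 1/4 := by
        have : ((3:ℕ):ℝ) - 1 = 2 := by norm_num
        rw [this] at hq
        nlinarith
      nlinarith [mul_nonneg hq0 hq0, mul_le_mul_of_nonneg_left h4 hq0,
        mul_le_mul_of_nonneg_left (mul_le_mul_of_nonneg_left h4 hq0) hq0]
  · -- k ≥ 4
    have hkR : (4:ℝ) ≤ (k:ℝ) := by exact_mod_cast hk4
    have hPcR : 2 * (Pc:ℝ) = (k:ℝ) * ((k:ℝ) - 1) := by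
      have h0 : ((2 * Pc : ℕ) : ℝ) = ((k * (k - 1) : ℕ) : ℝ) := by rw [hPc]
      push_cast [Nat.cast_sub (by omega : 1 ≤ k)] at h0
      linarith
    have hkq : (Pc:ℝ) * q ≤ 2/3 := by
      have hk1 : (1:ℝ) ≤ (k:ℝ) - 1 := by linarith
      have h5 : (k:ℝ) * (q * ((k:ℝ)-1)^2) ≤ (k:ℝ) :=
        le_trans (mul_le_mul_of_nonneg_left hq (by linarith)) (by linarith)
      have h6 : 3 * (k:ℝ) ≤ 4 * ((k:ℝ) - 1) := by linarith
      nlinarith [mul_nonneg hq0 (le_of_lt (by linarith : (0:ℝ) < (k:ℝ) - 1))]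
    calc (q + 1) ^ Pc ≤ Real.exp q ^ Pc :=
          pow_le_pow_left₀ (by linarith) (Real.add_one_le_exp q) Pc
      _ = Real.exp ((Pc:ℝ) * q) := by rw [Real.exp_nat_mul]
      _ ≤ Real.exp (2/3) := Real.exp_le_exp.mpr hkq
      _ ≤ 2 := exp_twothirds_le_two

end TN2Caux

namespace TN2Caux

lemma det_transpose_form {k : ℕ} (B : Matrix (Fin k) (Fin k) ℝ) :
    B.det = ∑ σ : Equiv.Perm (Fin k), Equiv.Perm.sign σ • ∏ i, B i (σ i) := by
  rw [← Matrix.det_transpose, Matrix.det_apply]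
  rfl

lemma term_bounds {k : ℕ} {C : ℝ} (hC0 : 0 < C)
    {B : Matrix (Fin k) (Fin k) ℝ} (hpos : ∀ i j, 0 < B i j)
    {σ : Equiv.Perm (Fin k)}
    (hA : C ^ (invs σ).card * ∏ x, B x (σ x) ≤ ∏ x, B x x) :
    -(C⁻¹ ^ (invs σ).card * ∏ i, B i i) ≤ Equiv.Perm.sign σ • ∏ i, B i (σ i) := by
  have hP : (0:ℝ) < ∏ i, B i (σ i) := Finset.prod_pos (fun i _ => hpos _ _)
  have hpow : (0:ℝ) < C ^ (invs σ).card := pow_pos hC0 _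
  have hP2 : ∏ i, B i (σ i) ≤ C⁻¹ ^ (invs σ).card * ∏ i, B i i := by
    rw [inv_pow]
    have h := mul_le_mul_of_nonneg_left hA (le_of_lt (inv_pos.mpr hpow))
    rwa [← mul_assoc, inv_mul_cancel₀ (ne_of_gt hpow), one_mul] at h
  rcases Int.units_eq_one_or (Equiv.Perm.sign σ) with hs | hs <;> rw [hs]
  · simp only [one_smul]
    have : (0:ℝ) ≤ C⁻¹ ^ (invs σ).card * ∏ i, B i i :=
      le_trans (le_of_lt hP) hP2
    linarith
  · have he : ((-1 : ℤˣ) • (∏ i, B i (σ i)) : ℝ) = -(∏ i, B i (σ i)) := by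
      simp [Units.smul_def]
    rw [he]
    linarith

lemma term_bounds_strict {k : ℕ} {C : ℝ} (hC0 : 0 < C)
    {B : Matrix (Fin k) (Fin k) ℝ} (hpos : ∀ i j, 0 < B i j)
    {σ : Equiv.Perm (Fin k)}
    (hA : C ^ (invs σ).card * ∏ x, B x (σ x) < ∏ x, B x x) :
    -(C⁻¹ ^ (invs σ).card * ∏ i, B i i) < Equiv.Perm.sign σ • ∏ i, B i (σ i) := by
  have hP : (0:ℝ) < ∏ i, B i (σ i) := Finset.prod_pos (fun i _ => hpos _ _)
  have hpow : (0:ℝ) < C ^ (invs σ).card := pow_pos hC0 _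
  have hP2 : ∏ i, B i (σ i) < C⁻¹ ^ (invs σ).card * ∏ i, B i i := by
    rw [inv_pow]
    have h := mul_lt_mul_of_pos_left hA (inv_pos.mpr hpow)
    rwa [← mul_assoc, inv_mul_cancel₀ (ne_of_gt hpow), one_mul] at h
  rcases Int.units_eq_one_or (Equiv.Perm.sign σ) with hs | hs <;> rw [hs]
  · simp only [one_smul]
    linarith
  · have he : ((-1 : ℤˣ) • (∏ i, B i (σ i)) : ℝ) = -(∏ i, B i (σ i)) := by
      simp [Units.smul_def]
    rw [he]
    linarith

end TN2Caux

namespace TN2Caux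

lemma sum_erase_le_one {k : ℕ} {C : ℝ} (hk : 2 ≤ k) (hC0 : 0 < C)
    (hkC : ((k:ℝ) - 1) ^ 2 ≤ C) :
    ∑ σ ∈ Finset.univ.erase (1 : Equiv.Perm (Fin k)), C⁻¹ ^ (invs σ).card ≤ 1 := by
  have hq0 : (0:ℝ) ≤ C⁻¹ := le_of_lt (inv_pos.mpr hC0)
  have hq1 : C⁻¹ * ((k:ℝ) - 1) ^ 2 ≤ 1 := by
    calc C⁻¹ * ((k:ℝ) - 1) ^ 2 ≤ C⁻¹ * C := mul_le_mul_of_nonneg_left hkC hq0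
      _ = 1 := inv_mul_cancel₀ (ne_of_gt hC0)
  have hsum2 : ∑ σ : Equiv.Perm (Fin k), C⁻¹ ^ (invs σ).card ≤ 2 :=
    le_trans (sum_q_pow_le hq0) (pow_bound hk hq0 hq1 (two_mul_card_pairs k))
  have hsplit := Finset.add_sum_erase Finset.univ (fun σ : Equiv.Perm (Fin k) =>
    C⁻¹ ^ (invs σ).card) (Finset.mem_univ 1)
  simp only [invs_one, Finset.card_empty, pow_zero] at hsplit
  linarith

lemma det_nonneg_aux {k : ℕ} {C : ℝ} (hkC : ((k:ℝ) - 1) ^ 2 ≤ C) (hC1 : 1 ≤ C)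
    (B : Matrix (Fin k) (Fin k) ℝ) (hpos : ∀ i j, 0 < B i j)
    (hB : ∀ i i' j j', i < i' → j < j' → C * (B i j' * B i' j) ≤ B i j * B i' j') :
    0 ≤ B.det := by
  have hC0 : (0:ℝ) < C := by linarith
  rcases Nat.lt_or_ge k 2 with hk | hk
  · interval_cases k
    · simp [Matrix.det_fin_zero]
    · rw [Matrix.det_fin_one]; exact (hpos 0 0).le
  · have hD : (0:ℝ) < ∏ i, B i i := Finset.prod_pos (fun i _ => hpos _ _)
    have hdet : B.det = (∏ i, B i i)
        + ∑ σ ∈ Finset.univ.erase (1 : Equiv.Perm (Fin k)),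
            Equiv.Perm.sign σ • ∏ i, B i (σ i) := by
      rw [det_transpose_form, ← Finset.add_sum_erase _ _ (Finset.mem_univ 1)]
      simp
    have hbound := fun (σ : Equiv.Perm (Fin k)) (_ : σ ∈ Finset.univ.erase 1) =>
      term_bounds hC0 hpos (prod_le_of_invs (le_of_lt hC0) hpos hB σ)
    have hsum := Finset.sum_le_sum hbound
    have hneg : ∑ σ ∈ Finset.univ.erase (1 : Equiv.Perm (Fin k)),
        -(C⁻¹ ^ (invs σ).card * ∏ i, B i i)
        = -((∑ σ ∈ Finset.univ.erase (1 : Equiv.Perm (Fin k)), C⁻¹ ^ (invs σ).card)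
            * ∏ i, B i i) := by
      rw [Finset.sum_neg_distrib, Finset.sum_mul]
    have hS := sum_erase_le_one hk hC0 hkC
    rw [hneg] at hsum
    set S := ∑ σ ∈ Finset.univ.erase (1 : Equiv.Perm (Fin k)), C⁻¹ ^ (invs σ).card
    nlinarith [mul_nonneg (by linarith : (0:ℝ) ≤ 1 - S) hD.le]

lemma det_pos_aux {k : ℕ} {C : ℝ} (hkC : ((k:ℝ) - 1) ^ 2 ≤ C) (hC1 : 1 ≤ C)
    (B : Matrix (Fin k) (Fin k) ℝ) (hpos : ∀ i j, 0 < B i j)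
    (hB : ∀ i i' j j', i < i' → j < j' → C * (B i j' * B i' j) < B i j * B i' j') :
    0 < B.det := by
  have hC0 : (0:ℝ) < C := by linarith
  rcases Nat.lt_or_ge k 2 with hk | hk
  · interval_cases k
    · simp [Matrix.det_fin_zero]
    · rw [Matrix.det_fin_one]; exact hpos 0 0
  · have hD : (0:ℝ) < ∏ i, B i i := Finset.prod_pos (fun i _ => hpos _ _)
    have hdet : B.det = (∏ i, B i i)
        + ∑ σ ∈ Finset.univ.erase (1 : Equiv.Perm (Fin k)),
            Equiv.Perm.sign σ • ∏ i, B i (σ i) := by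
      rw [det_transpose_form, ← Finset.add_sum_erase _ _ (Finset.mem_univ 1)]
      simp
    have hne : (Finset.univ.erase (1 : Equiv.Perm (Fin k))).Nonempty := by
      have h2k : 0 < k := by omega
      have h2k' : 1 < k := by omega
      set a : Fin k := ⟨0, h2k⟩ with ha
      set b : Fin k := ⟨1, h2k'⟩ with hb
      have hab : a ≠ b := by
        intro h; have h3 := congrArg Fin.val h; simp [ha, hb] at h3
      refine ⟨Equiv.swap a b, Finset.mem_erase.mpr ⟨?_, Finset.mem_univ _⟩⟩
      intro hc
      have h4 := congrArg (fun σ : Equiv.Perm (Fin k) => σ a) hc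
      simp only [Equiv.swap_apply_left, Equiv.Perm.one_apply] at h4
      exact hab h4.symm
    have hbound : ∀ σ ∈ Finset.univ.erase (1 : Equiv.Perm (Fin k)),
        -(C⁻¹ ^ (invs σ).card * ∏ i, B i i) < Equiv.Perm.sign σ • ∏ i, B i (σ i) := by
      intro σ hσ
      exact term_bounds_strict hC0 hpos
        (prod_lt_of_invs hC0 hpos hB (Finset.mem_erase.mp hσ).1)
    have hsum := Finset.sum_lt_sum_of_nonempty hne hbound
    have hneg : ∑ σ ∈ Finset.univ.erase (1 : Equiv.Perm (Fin k)),
        -(C⁻¹ ^ (invs σ).card * ∏ i, B i i)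
        = -((∑ σ ∈ Finset.univ.erase (1 : Equiv.Perm (Fin k)), C⁻¹ ^ (invs σ).card)
            * ∏ i, B i i) := by
      rw [Finset.sum_neg_distrib, Finset.sum_mul]
    have hS := sum_erase_le_one hk hC0 hkC
    rw [hneg] at hsum
    set S := ∑ σ ∈ Finset.univ.erase (1 : Equiv.Perm (Fin k)), C⁻¹ ^ (invs σ).card
    nlinarith [mul_nonneg (by linarith : (0:ℝ) ≤ 1 - S) hD.le]

end TN2Caux


/-- A positive n×m matrix in TN_{2,C} with C ≥ (min(n,m)-1)² is totally nonnegative,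
and totally positive when the defining inequalities are strict. -/
theorem totally_nonneg_of_TN2C (n m : ℕ) (hn : 2 ≤ n) (hm : 2 ≤ m) (C : ℝ)
    (hC : ((min n m : ℕ) - 1 : ℝ) ^ 2 ≤ C)
    (A : Matrix (Fin n) (Fin m) ℝ) (hpos : ∀ i j, 0 < A i j)
    (h : ∀ (i i' : Fin n) (j j' : Fin m), i < i' → j < j' →
      C * (A i j' * A i' j) ≤ A i j * A i' j') :
    (∀ (k : ℕ) (r : Fin k → Fin n) (c : Fin k → Fin m), StrictMono r → StrictMono c →
      0 ≤ (A.submatrix r c).det) ∧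
    ((∀ (i i' : Fin n) (j j' : Fin m), i < i' → j < j' →
        C * (A i j' * A i' j) < A i j * A i' j') →
      ∀ (k : ℕ) (r : Fin k → Fin n) (c : Fin k → Fin m), StrictMono r → StrictMono c →
        0 < (A.submatrix r c).det) := by
  have hmin2 : (2:ℝ) ≤ ((min n m : ℕ) : ℝ) := by
    have h2 : 2 ≤ min n m := le_min hn hm
    exact_mod_cast h2
  have hC1 : 1 ≤ C := le_trans (by nlinarith) hC
  have hkC : ∀ (k : ℕ) (r : Fin k → Fin n) (c : Fin k → Fin m), StrictMono r → StrictMono c →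
      ((k:ℝ) - 1) ^ 2 ≤ C := by
    intro k r c hr hc
    have hkn : k ≤ n := by simpa using Fintype.card_le_of_injective r hr.injective
    have hkm : k ≤ m := by simpa using Fintype.card_le_of_injective c hc.injective
    have hkM : (k:ℝ) ≤ ((min n m : ℕ) : ℝ) := by exact_mod_cast le_min hkn hkm
    refine le_trans ?_ hC
    have hk0 : (0:ℝ) ≤ (k:ℝ) := Nat.cast_nonneg k
    nlinarith [mul_nonneg (by linarith : (0:ℝ) ≤ ((min n m : ℕ) : ℝ) - (k:ℝ))
      (by linarith : (0:ℝ) ≤ ((min n m : ℕ) : ℝ) + (k:ℝ) - 2)]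
  constructor
  · intro k r c hr hc
    exact TN2Caux.det_nonneg_aux (hkC k r c hr hc) hC1 _ (fun i j => hpos _ _)
      (fun i i' j j' hii hjj => h (r i) (r i') (c j) (c j') (hr hii) (hc hjj))
  · intro h' k r c hr hc
    exact TN2Caux.det_pos_aux (hkC k r c hr hc) hC1 _ (fun i j => hpos _ _)
      (fun i i' j j' hii hjj => h' (r i) (r i') (c j) (c j') (hr hii) (hc hjj))
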